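/- Let G be a (d+1)-lateration graph on n vertices with lateration ordering 1, ..., n, and let (G,P) be a framework in general position in R^d with d ≤ n-1. Then there exists a symmetric positive semidefinite n × n matrix S of rank n - d - 1 such that A S = 0 (where A = [P; e^T]) and S_{ij} = 0 for every pair i ≠ j with (i,j) not an edge of G. -/

import Mathlib

open Matrix Finset

section S12

variable {d n : ℕ}

noncomputable def s12q (p : Fin n → Fin d → ℝ) (j : Fin n) : Fin (d+1) → ℝ :=
  fun r => if h : (r:ℕ) < d then p j ⟨r, h⟩ else 1

noncomputable def s12A (p : Fin n → Fin d → ℝ) : Matrix (Fin (d+1)) (Fin n) ℝ :=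
  Matrix.of fun i j => if h : (i:ℕ) < d then p j ⟨i, h⟩ else (1:ℝ)

lemma s12A_apply (p : Fin n → Fin d → ℝ) (i : Fin (d+1)) (j : Fin n) :
    s12A p i j = s12q p j i := rfl

lemma s12_span (p : Fin n → Fin d → ℝ)
    (hGP : ∀ s : Finset (Fin n), s.card = d + 1 →
        AffineIndependent ℝ (fun i : s => p i))
    (N : Finset (Fin n)) (hN : N.card = d + 1) :
    Submodule.span ℝ (Set.range (fun i : N => s12q p i)) = ⊤ := by
  have hcard : Fintype.card N = d + 1 := by simp [hN]
  have hli : LinearIndependent ℝ (fun i : N => s12q p i) := by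
    rw [Fintype.linearIndependent_iff]
    intro g hg
    have heval : ∀ r : Fin (d+1), ∑ i : N, g i * s12q p i r = 0 := by
      intro r
      have := congrFun hg r
      simpa [Finset.sum_apply] using this
    have hsum1 : ∑ i : N, g i = 0 := by
      have := heval ⟨d, Nat.lt_succ_self d⟩
      simpa [s12q] using this
    have hsum2 : ∑ i : N, g i • p (i : Fin n) = 0 := by
      funext t
      have := heval ⟨(t : ℕ), t.isLt.trans (Nat.lt_succ_self d)⟩
      simp only [Finset.sum_apply, Pi.smul_apply, smul_eq_mul, Pi.zero_apply]
      simpa [s12q, t.isLt, Fin.eta] using this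
    exact fun i => affineIndependent_iff.mp (hGP N hN) Finset.univ g (by simpa using hsum1)
      (by simpa using hsum2) i (mem_univ i)
  have hfr : Fintype.card N = Module.finrank ℝ (Fin (d+1) → ℝ) := by
    simp [hcard]
  have : Nonempty N := by
    rw [← Fintype.card_pos_iff, hcard]; omega
  exact hli.span_eq_top_of_card_eq_finrank hfr

lemma s12_dep (p : Fin n → Fin d → ℝ)
    (hGP : ∀ s : Finset (Fin n), s.card = d + 1 →
        AffineIndependent ℝ (fun i : s => p i))
    (N : Finset (Fin n)) (hN : N.card = d + 1) (w : Fin n) (hw : w ∉ N) :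
    ∃ ζ : Fin n → ℝ, (s12A p) *ᵥ ζ = 0 ∧ ζ w = 1 ∧ (∀ i, i ≠ w → i ∉ N → ζ i = 0) := by
  have hmem : s12q p w ∈ Submodule.span ℝ (Set.range (fun i : N => s12q p i)) := by
    rw [s12_span p hGP N hN]; trivial
  rw [Submodule.mem_span_range_iff_exists_fun] at hmem
  obtain ⟨g, hg⟩ := hmem
  classical
  refine ⟨fun i => if i = w then 1 else if h : i ∈ N then -g ⟨i, h⟩ else 0, ?_, by simp, ?_⟩
  · funext r
    have hgr : ∑ i : N, g i * s12q p i r = s12q p w r := by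
      have := congrFun hg r
      simpa [Finset.sum_apply] using this
    have hsplit : ∀ i : Fin n,
        s12A p r i * (if i = w then 1 else if h : i ∈ N then -g ⟨i, h⟩ else 0)
        = (if i = w then s12q p w r else 0)
          + (if h : i ∈ N then -g ⟨i, h⟩ * s12q p i r else 0) := by
      intro i
      by_cases hiw : i = w
      · subst hiw
        simp [hw, s12A_apply, mul_comm]
      · by_cases hiN : i ∈ N
        · simp [hiw, hiN, s12A_apply, mul_comm]
        · simp [hiw, hiN]
    simp only [Matrix.mulVec, dotProduct]
    rw [Finset.sum_congr rfl (fun i _ => hsplit i), Finset.sum_add_distrib]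
    rw [Finset.sum_ite_eq' Finset.univ w (fun _ => s12q p w r)]
    have h2 : ∑ i : Fin n, (if h : i ∈ N then -g ⟨i, h⟩ * s12q p i r else 0)
        = - ∑ i : N, g i * s12q p i r := by
      have e1 : (∑ i : Fin n, (if h : i ∈ N then -g ⟨i, h⟩ * s12q p i r else 0))
          = ∑ i ∈ N, (if h : i ∈ N then -g ⟨i, h⟩ * s12q p i r else 0) :=
        (Finset.sum_subset (Finset.subset_univ N) (by intro x _ hx; simp [hx])).symm
      rw [e1, ← Finset.sum_attach N (fun i => if h : i ∈ N then -g ⟨i, h⟩ * s12q p i r else 0),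
        ← Finset.sum_neg_distrib, Finset.univ_eq_attach]
      apply Finset.sum_congr rfl
      intro x _
      simp [x.2]
    rw [h2, hgr]
    simp
  · intro i hiw hiN
    simp [hiw, hiN]

lemma s12_quadform_aux (c : Fin n → ℝ) (v : Fin n) (z : Fin n → ℝ)
    (C : Matrix (Fin n) (Fin n) ℝ)
    (hC : ∀ i j, C i j = (if j = v then c i else 0) + (if i = v then c j else 0)) :
    z ⬝ᵥ (C *ᵥ z) = 2 * (z v * (c ⬝ᵥ z)) := by
  have hexp : z ⬝ᵥ (C *ᵥ z) = ∑ i, ∑ j, z i * (C i j * z j) := by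
    simp [dotProduct, Matrix.mulVec, Finset.mul_sum]
  rw [hexp]
  have hterm : ∀ i j, z i * (C i j * z j)
      = (if j = v then z i * c i * z j else 0) + (if i = v then z i * (c j * z j) else 0) := by
    intro i j
    rw [hC i j]
    by_cases h1 : j = v <;> by_cases h2 : i = v <;> simp [h1, h2] <;> ring
  have hrow : ∀ i, ∑ j, z i * (C i j * z j)
      = z i * c i * z v + (if i = v then z i * (c ⬝ᵥ z) else 0) := by
    intro i
    rw [Finset.sum_congr rfl (fun j _ => hterm i j), Finset.sum_add_distrib]
    congr 1
    · exact Finset.sum_ite_eq' Finset.univ v (fun j => z i * c i * z j) |>.trans (by simp)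
    · by_cases h2 : i = v
      · simp [h2, dotProduct, Finset.mul_sum]
      · simp [h2]
  have this2 : ∑ i, z i * c i * z v = (∑ i, c i * z i) * z v := by
    rw [Finset.sum_mul]; exact Finset.sum_congr rfl (fun i _ => by ring)
  rw [Finset.sum_congr rfl (fun i _ => hrow i), Finset.sum_add_distrib,
    Finset.sum_ite_eq' Finset.univ v (fun i => z i * (c ⬝ᵥ z)), this2]
  simp [dotProduct]
  ring

lemma s12_D (G : SimpleGraph (Fin n)) [DecidableRel G.Adj]
    (hclique : ∀ i j : Fin n, i ≠ j → (i : ℕ) < d + 1 → (j : ℕ) < d + 1 → G.Adj i j)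
    (hlat : ∀ j : Fin n, d + 1 ≤ (j : ℕ) →
      (Finset.univ.filter (fun i : Fin n => G.Adj i j ∧ i < j)).card = d + 1)
    (p : Fin n → Fin d → ℝ)
    (hGP : ∀ s : Finset (Fin n), s.card = d + 1 →
        AffineIndependent ℝ (fun i : s => p i)) :
    ∀ k : ℕ, k ≤ n → ∀ C : Matrix (Fin n) (Fin n) ℝ, Cᵀ = C →
      (∀ i j : Fin n, C i j ≠ 0 → i ≠ j ∧ ¬G.Adj i j ∧ (i:ℕ) < k ∧ (j:ℕ) < k) →
      (∀ z : Fin n → ℝ, (∀ i : Fin n, k ≤ (i:ℕ) → z i = 0) → (s12A p) *ᵥ z = 0 →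
         0 ≤ z ⬝ᵥ (C *ᵥ z)) → C = 0 := by
  intro k
  induction k with
  | zero =>
    intro _ C _ hsupp _
    ext i j
    by_contra h0
    have := (hsupp i j h0).2.2.1
    omega
  | succ k IH =>
    intro hk1 C hsym hsupp hquad
    have hsymE : ∀ i j, C j i = C i j := fun i j => congrFun (congrFun hsym i) j
    by_cases hkd : k + 1 ≤ d + 1
    · ext i j
      by_contra h0
      obtain ⟨hij, hnadj, hi, hj⟩ := hsupp i j h0
      exact hnadj (hclique i j hij (by omega) (by omega))
    · have hdk : d + 1 ≤ k := by omega
      have hkn : k < n := by omega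
      set v : Fin n := ⟨k, hkn⟩ with hv
      have hvval : (v : ℕ) = k := rfl
      set N := Finset.univ.filter (fun i : Fin n => G.Adj i v ∧ i < v) with hNdef
      have hNcard : N.card = d + 1 := hlat v hdk
      have hNlt : ∀ i ∈ N, (i:ℕ) < k := by
        intro i hi
        exact (Finset.mem_filter.mp hi).2.2
      have hNadj : ∀ i ∈ N, G.Adj i v := fun i hi => (Finset.mem_filter.mp hi).2.1
      have hC' : (Matrix.of fun i j => if i = v ∨ j = v then (0:ℝ) else C i j) = 0 := by
        apply IH (by omega)
        · ext i j
          simp only [Matrix.transpose_apply, Matrix.of_apply]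
          by_cases h : i = v ∨ j = v
          · rw [if_pos h.symm, if_pos h]
          · rw [if_neg (fun hh => h hh.symm), if_neg h, hsymE i j]
        · intro i j h0
          simp only [Matrix.of_apply] at h0
          by_cases h1 : i = v ∨ j = v
          · rw [if_pos h1] at h0; exact absurd rfl h0
          · rw [if_neg h1] at h0
            push_neg at h1
            obtain ⟨hij, hnadj, hi, hj⟩ := hsupp i j h0
            have hiv : (i:ℕ) ≠ k := fun hc => h1.1 (Fin.ext hc)
            have hjv : (j:ℕ) ≠ k := fun hc => h1.2 (Fin.ext hc)
            exact ⟨hij, hnadj, by omega, by omega⟩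
        · intro z hz hAz
          have hzv : z v = 0 := hz v (le_of_eq hvval.symm)
          have heq : z ⬝ᵥ ((Matrix.of fun i j => if i = v ∨ j = v then (0:ℝ) else C i j) *ᵥ z)
              = z ⬝ᵥ (C *ᵥ z) := by
            simp only [dotProduct, Matrix.mulVec, Matrix.of_apply]
            apply Finset.sum_congr rfl
            intro i _
            by_cases h1 : i = v
            · rw [h1, hzv]; ring
            · congr 1
              apply Finset.sum_congr rfl
              intro j _
              by_cases h2 : j = v
              · rw [h2, hzv]; simp
              · rw [if_neg (by tauto)]
          rw [heq]
          exact hquad z (fun i hi => hz i (by omega)) hAz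
      have hoff : ∀ i j, i ≠ v → j ≠ v → C i j = 0 := by
        intro i j h1 h2
        have := congrFun (congrFun hC' i) j
        simpa [h1, h2] using this
      set c : Fin n → ℝ := fun i => C i v with hc
      have hcv : c v = 0 := by
        by_contra h
        exact (hsupp v v h).1 rfl
      have hcadj : ∀ i, G.Adj i v → c i = 0 := by
        intro i hadj
        by_contra h
        exact (hsupp i v h).2.1 hadj
      have hclt : ∀ i : Fin n, ¬((i:ℕ) < k) → c i = 0 := by
        intro i hik
        by_contra h
        obtain ⟨hij, _, hi, _⟩ := hsupp i v h
        have : (i:ℕ) ≠ k := fun hc => hij (Fin.ext hc)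
        omega
      have hCform : ∀ i j, C i j = (if j = v then c i else 0) + (if i = v then c j else 0) := by
        intro i j
        by_cases h1 : i = v <;> by_cases h2 : j = v
        · subst h1; subst h2
          have h0 : C v v = 0 := hcv
          simp [hcv, h0]
        · subst h1
          rw [if_neg h2, if_pos rfl, zero_add]
          exact (hsymE v j).symm
        · subst h2
          rw [if_pos rfl, if_neg h1, add_zero]
        · rw [if_neg h1, if_neg h2, hoff i j h1 h2]; simp
      have hvN : v ∉ N := by
        intro h
        exact absurd (Finset.mem_filter.mp h).2.2 (lt_irrefl v)
      obtain ⟨ω, hω1, hω2, hω3⟩ := s12_dep p hGP N hNcard v hvN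
      have key : ∀ z' : Fin n → ℝ, (∀ i : Fin n, k ≤ (i:ℕ) → z' i = 0) →
          (s12A p) *ᵥ z' = 0 → c ⬝ᵥ z' = 0 := by
        intro z' hz' hAz'
        have hcω : c ⬝ᵥ ω = 0 := by
          apply Finset.sum_eq_zero
          intro i _
          by_cases h1 : i = v
          · rw [h1, hcv]; ring
          · by_cases h2 : i ∈ N
            · rw [hcadj i (hNadj i h2)]; ring
            · rw [hω3 i h1 h2]; ring
        have hq : ∀ t : ℝ, 0 ≤ 2 * (t * (c ⬝ᵥ z')) := by
          intro t
          have hsupz : ∀ i : Fin n, k + 1 ≤ (i:ℕ) → (z' + t • ω) i = 0 := by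
            intro i hi
            have h1 : z' i = 0 := hz' i (by omega)
            have h2 : ω i = 0 := by
              apply hω3 i
              · intro hc; rw [hc, hvval] at hi; omega
              · intro hN; have := hNlt i hN; omega
            simp [h1, h2]
          have hAz : (s12A p) *ᵥ (z' + t • ω) = 0 := by
            rw [Matrix.mulVec_add, Matrix.mulVec_smul, hω1, hAz']; simp
          have h0 := hquad _ hsupz hAz
          have hzv' : (z' + t • ω) v = t := by
            have : z' v = 0 := hz' v (le_of_eq hvval.symm)
            simp [this, hω2]
          have hdot : c ⬝ᵥ (z' + t • ω) = c ⬝ᵥ z' := by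
            rw [dotProduct_add, dotProduct_smul, hcω]
            simp
          rw [s12_quadform_aux c v _ C hCform, hzv', hdot] at h0
          exact h0
        have h1 := hq 1
        have h2 := hq (-1)
        linarith
      have hc0 : ∀ i, c i = 0 := by
        intro i₀
        by_cases hik : (i₀:ℕ) < k
        · by_contra hne
          have hi₀N : i₀ ∉ N := fun h => hne (hcadj i₀ (hNadj i₀ h))
          obtain ⟨ζ, hζ1, hζ2, hζ3⟩ := s12_dep p hGP N hNcard i₀ hi₀N
          have h0 := key ζ (fun i hi => hζ3 i
            (fun hc => by rw [hc] at hi; omega)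
            (fun hN => by have := hNlt i hN; omega)) hζ1
          have : c ⬝ᵥ ζ = c i₀ := by
            rw [dotProduct, Finset.sum_eq_single i₀]
            · rw [hζ2]; ring
            · intro i _ hii₀
              by_cases hiN : i ∈ N
              · rw [hcadj i (hNadj i hiN)]; ring
              · rw [hζ3 i hii₀ hiN]; ring
            · intro h; exact absurd (Finset.mem_univ i₀) h
          rw [this] at h0
          exact hne h0
        · exact hclt i₀ hik
      ext i j
      rw [hCform i j, hc0 i, hc0 j]
      simp

end S12

section S12sepB



attribute [local instance] Matrix.normedAddCommGroup Matrix.normedSpace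

variable {m N : ℕ}

lemma s12_posdef_iff (M : Matrix (Fin m) (Fin m) ℝ) :
    M.PosDef ↔ M.IsHermitian ∧ ∀ x : Fin m → ℝ, x ≠ 0 → 0 < x ⬝ᵥ (M *ᵥ x) := by
  rw [Matrix.posDef_iff_dotProduct_mulVec]
  constructor
  · rintro ⟨h1, h2⟩
    exact ⟨h1, fun x hx => by simpa using h2 hx⟩
  · rintro ⟨h1, h2⟩
    exact ⟨h1, fun x hx => by simpa using h2 x hx⟩

lemma s12_form_bound (E : Matrix (Fin m) (Fin m) ℝ) (u : Fin m → ℝ)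
    (hu : ∀ i, |u i| ≤ 1) (c : ℝ) (hE : ∀ i j, |E i j| ≤ c) :
    |u ⬝ᵥ (E *ᵥ u)| ≤ (m:ℝ)^2 * c := by
  have h1 : ∀ i, |(E *ᵥ u) i| ≤ (m:ℝ) * c := by
    intro i
    show |(fun j => E i j) ⬝ᵥ u| ≤ (m:ℝ) * c
    calc |∑ j, E i j * u j| ≤ ∑ j, |E i j * u j| := Finset.abs_sum_le_sum_abs _ _
      _ ≤ ∑ _j : Fin m, c := by
          apply Finset.sum_le_sum
          intro j _
          rw [abs_mul]
          calc |E i j| * |u j| ≤ |E i j| * 1 :=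
            mul_le_mul_of_nonneg_left (hu j) (abs_nonneg _)
            _ ≤ c := by simpa using hE i j
      _ = (m:ℝ) * c := by simp [mul_comm]
  calc |u ⬝ᵥ (E *ᵥ u)| ≤ ∑ i, |u i * (E *ᵥ u) i| := Finset.abs_sum_le_sum_abs _ _
    _ ≤ ∑ _i : Fin m, 1 * ((m:ℝ) * c) := by
        apply Finset.sum_le_sum
        intro i _
        rw [abs_mul]
        exact mul_le_mul (hu i) (h1 i) (abs_nonneg _) zero_le_one
    _ = (m:ℝ)^2 * c := by simp; ring

lemma s12_isOpen : IsOpen {X : Matrix (Fin m) (Fin m) ℝ | (X + Xᴴ).PosDef} := by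
  rcases isEmpty_or_nonempty (Fin m) with hE | hNE
  · have : {X : Matrix (Fin m) (Fin m) ℝ | (X + Xᴴ).PosDef} = Set.univ := by
      ext X
      simp only [Set.mem_univ, iff_true, Set.mem_setOf_eq]
      rw [s12_posdef_iff]
      constructor
      · exact isHermitian_add_transpose_self X
      · intro x hx
        exact absurd (funext fun i => (hE.elim i)) hx
    rw [this]
    exact isOpen_univ
  · refine Metric.isOpen_iff.mpr ?_
    intro X₀ hX₀
    rw [Set.mem_setOf_eq, s12_posdef_iff] at hX₀
    have hsc : IsCompact (Metric.sphere (0 : Fin m → ℝ) 1) := isCompact_sphere 0 1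
    have hsne : (Metric.sphere (0 : Fin m → ℝ) 1).Nonempty := by
      refine ⟨fun _ => 1, ?_⟩
      rw [mem_sphere_zero_iff_norm]
      simp
    have hcont : Continuous (fun x : Fin m → ℝ => x ⬝ᵥ ((X₀ + X₀ᴴ) *ᵥ x)) := by
      show Continuous fun x : Fin m → ℝ => ∑ i, x i * ∑ j, (X₀ + X₀ᴴ) i j * x j
      apply continuous_finset_sum
      intro i _
      apply Continuous.mul (continuous_apply i)
      apply continuous_finset_sum
      intro j _
      exact Continuous.mul continuous_const (continuous_apply j)
    obtain ⟨x₀, hx₀mem, hx₀min⟩ := hsc.exists_isMinOn hsne hcont.continuousOn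
    have hx₀ne : x₀ ≠ 0 := by
      intro h
      rw [mem_sphere_zero_iff_norm, h] at hx₀mem
      simp at hx₀mem
    have hδpos : 0 < x₀ ⬝ᵥ ((X₀ + X₀ᴴ) *ᵥ x₀) := hX₀.2 x₀ hx₀ne
    set δ := x₀ ⬝ᵥ ((X₀ + X₀ᴴ) *ᵥ x₀) with hδ
    have hden : (0:ℝ) < 2 * (m:ℝ)^2 + 1 := by positivity
    refine ⟨δ / (2 * (m:ℝ)^2 + 1), by positivity, ?_⟩
    intro X hX
    rw [Metric.mem_ball, dist_eq_norm] at hX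
    rw [Set.mem_setOf_eq, s12_posdef_iff]
    refine ⟨isHermitian_add_transpose_self X, ?_⟩
    have key : ∀ u : Fin m → ℝ, ‖u‖ = 1 → 0 < u ⬝ᵥ ((X + Xᴴ) *ᵥ u) := by
      intro u hu
      have humem : u ∈ Metric.sphere (0 : Fin m → ℝ) 1 := mem_sphere_zero_iff_norm.mpr hu
      have hQu0 : δ ≤ u ⬝ᵥ ((X₀ + X₀ᴴ) *ᵥ u) := hx₀min humem
      have habs : ∀ i, |u i| ≤ 1 := by
        intro i
        have := norm_le_pi_norm u i
        rw [hu] at this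
        simpa using this
      have hEnt : ∀ i j, |((X + Xᴴ) - (X₀ + X₀ᴴ)) i j| ≤ 2 * ‖X - X₀‖ := by
        intro i j
        have h1 : ((X + Xᴴ) - (X₀ + X₀ᴴ)) i j = (X - X₀) i j + (X - X₀) j i := by
          simp [Matrix.conjTranspose_apply, Matrix.add_apply, Matrix.sub_apply]
          ring
        rw [h1]
        have h2 := Matrix.norm_entry_le_entrywise_sup_norm (X - X₀) (i := i) (j := j)
        have h3 := Matrix.norm_entry_le_entrywise_sup_norm (X - X₀) (i := j) (j := i)
        calc |(X - X₀) i j + (X - X₀) j i| ≤ |(X - X₀) i j| + |(X - X₀) j i| := abs_add_le _ _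
          _ ≤ 2 * ‖X - X₀‖ := by
              rw [Real.norm_eq_abs] at h2 h3
              linarith
      have hbound := s12_form_bound ((X + Xᴴ) - (X₀ + X₀ᴴ)) u habs (2 * ‖X - X₀‖) hEnt
      have hsplit : u ⬝ᵥ ((X + Xᴴ) *ᵥ u)
          = u ⬝ᵥ ((X₀ + X₀ᴴ) *ᵥ u) + u ⬝ᵥ (((X + Xᴴ) - (X₀ + X₀ᴴ)) *ᵥ u) := by
        rw [Matrix.sub_mulVec, dotProduct_sub]
        ring
      have hnn : (0:ℝ) ≤ (m:ℝ)^2 := by positivity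
      have : (m:ℝ)^2 * (2 * ‖X - X₀‖) ≤ (m:ℝ)^2 * (2 * (δ / (2 * (m:ℝ)^2 + 1))) := by
        apply mul_le_mul_of_nonneg_left _ hnn
        linarith
      have hfinal : (m:ℝ)^2 * (2 * (δ / (2 * (m:ℝ)^2 + 1))) < δ := by
        have h2 : (m:ℝ)^2 * (2 * (δ / (2 * (m:ℝ)^2 + 1)))
            = δ * ((2 * (m:ℝ)^2) / (2 * (m:ℝ)^2 + 1)) := by
          field_simp
        rw [h2]
        have hr : (2 * (m:ℝ)^2) / (2 * (m:ℝ)^2 + 1) < 1 :=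
          (div_lt_one hden).mpr (by linarith)
        exact mul_lt_of_lt_one_right hδpos hr
      have := abs_le.mp hbound
      rw [hsplit]
      nlinarith
    intro y hy
    have hyn : ‖y‖ ≠ 0 := norm_ne_zero_iff.mpr hy
    have hypos : 0 < ‖y‖ := norm_pos_iff.mpr hy
    set u : Fin m → ℝ := ‖y‖⁻¹ • y with hudef
    have hu : ‖u‖ = 1 := by
      rw [hudef, norm_smul]
      simp [abs_of_nonneg (inv_nonneg.mpr (norm_nonneg y)), inv_mul_cancel₀ hyn]
    have hfu := key u hu
    have hyu : y = ‖y‖ • u := by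
      rw [hudef, smul_smul, mul_inv_cancel₀ hyn, one_smul]
    have heq : y ⬝ᵥ ((X + Xᴴ) *ᵥ y) = ‖y‖ * (‖y‖ * (u ⬝ᵥ ((X + Xᴴ) *ᵥ u))) := by
      conv_lhs => rw [hyu]
      rw [Matrix.mulVec_smul, dotProduct_smul, smul_dotProduct]
      simp only [smul_eq_mul]
    rw [heq]
    exact mul_pos hypos (mul_pos hypos hfu)

lemma s12_sq_pos (y : Fin m → ℝ) (hy : y ≠ 0) : 0 < y ⬝ᵥ y := by
  obtain ⟨i, hi⟩ := Function.ne_iff.mp hy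
  apply Finset.sum_pos' (fun j _ => mul_self_nonneg _)
  exact ⟨i, Finset.mem_univ i, mul_self_pos.mpr hi⟩

set_option maxHeartbeats 1600000 in
lemma s12_sep (W : Matrix (Fin N) (Fin m) ℝ) (P : Fin N → Fin N → Prop)
    [DecidableRel P] (hPsymm : ∀ i j, P i j → P j i)
    (hD : ∀ C : Matrix (Fin N) (Fin N) ℝ, Cᵀ = C → (∀ i j, C i j ≠ 0 → P i j) →
      (∀ x : Fin m → ℝ, 0 ≤ (W *ᵥ x) ⬝ᵥ (C *ᵥ (W *ᵥ x))) → C = 0) :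
    ∃ Λ : Matrix (Fin m) (Fin m) ℝ, Λ.PosDef ∧ ∀ i j, P i j → (W * Λ * Wᵀ) i j = 0 := by
  classical
  set U : Set (Matrix (Fin m) (Fin m) ℝ) := {X | (X + Xᴴ).PosDef} with hUdef
  have hlin : ∀ (a : ℝ) (X Y : Matrix (Fin m) (Fin m) ℝ),
      W * ((a • X + Y) + (a • X + Y)ᴴ) * Wᵀ
        = a • (W * (X + Xᴴ) * Wᵀ) + W * (Y + Yᴴ) * Wᵀ := by
    intro a X Y
    have h1 : (a • X + Y) + (a • X + Y)ᴴ = a • (X + Xᴴ) + (Y + Yᴴ) := by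
      rw [Matrix.conjTranspose_add, Matrix.conjTranspose_smul, smul_add]
      simp only [star_trivial]
      abel
    rw [h1, Matrix.mul_add, Matrix.add_mul, Matrix.mul_smul, Matrix.smul_mul]
  set Φ : Matrix (Fin m) (Fin m) ℝ →ₗ[ℝ] Matrix (Fin N) (Fin N) ℝ :=
    { toFun := fun X => Matrix.of fun i j => if P i j then (W * (X + Xᴴ) * Wᵀ) i j else 0
      map_add' := by
        intro X Y
        have h := hlin 1 X Y
        simp only [one_smul] at h
        ext i j
        simp only [Matrix.of_apply, Matrix.add_apply]
        by_cases hp : P i j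
        · rw [if_pos hp, if_pos hp, if_pos hp, h, Matrix.add_apply]
        · rw [if_neg hp, if_neg hp, if_neg hp, add_zero]
      map_smul' := by
        intro a X
        have h := hlin a X 0
        simp only [add_zero, Matrix.conjTranspose_zero, Matrix.mul_zero, Matrix.zero_mul] at h
        ext i j
        simp only [Matrix.of_apply, RingHom.id_apply, Matrix.smul_apply]
        by_cases hp : P i j
        · rw [if_pos hp, if_pos hp, h]; rfl
        · rw [if_neg hp, if_neg hp, smul_zero] } with hΦdef
  have hΦapply : ∀ X i j, Φ X i j = if P i j then (W * (X + Xᴴ) * Wᵀ) i j else 0 := by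
    intro X i j; rfl
  by_cases hdisj : Disjoint U {X : Matrix (Fin m) (Fin m) ℝ | Φ X = 0}
  case neg =>
    rw [Set.not_disjoint_iff] at hdisj
    obtain ⟨X, hXU, hXB⟩ := hdisj
    refine ⟨X + Xᴴ, hXU, ?_⟩
    intro i j hPij
    have h := congrFun (congrFun (Set.mem_setOf_eq ▸ hXB) i) j
    rw [hΦapply, if_pos hPij] at h
    exact h
  case pos =>
    exfalso
    have hUconv : Convex ℝ U := by
      intro X hX Y hY a b ha hb hab
      rw [hUdef, Set.mem_setOf_eq, s12_posdef_iff] at hX hY ⊢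
      refine ⟨isHermitian_add_transpose_self _, ?_⟩
      intro x hx
      have q1 := hX.2 x hx
      have q2 := hY.2 x hx
      have h1 : (a • X + b • Y) + (a • X + b • Y)ᴴ = a • (X + Xᴴ) + b • (Y + Yᴴ) := by
        rw [Matrix.conjTranspose_add, Matrix.conjTranspose_smul, Matrix.conjTranspose_smul,
          smul_add, smul_add]
        simp only [star_trivial]
        abel
      rw [h1, Matrix.add_mulVec, Matrix.smul_mulVec, Matrix.smul_mulVec,
        dotProduct_add, dotProduct_smul, dotProduct_smul]
      simp only [smul_eq_mul]
      rcases eq_or_lt_of_le ha with h | h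
      · have hb1 : b = 1 := by linarith
        rw [← h, hb1]
        simpa using q2
      · have h1' : 0 < a * (x ⬝ᵥ ((X + Xᴴ) *ᵥ x)) := mul_pos h q1
        have h2' : 0 ≤ b * (x ⬝ᵥ ((Y + Yᴴ) *ᵥ x)) := mul_nonneg hb q2.le
        linarith
    have hUopen : IsOpen U := s12_isOpen
    have hBconv : Convex ℝ {X : Matrix (Fin m) (Fin m) ℝ | Φ X = 0} := by
      have hset : {X : Matrix (Fin m) (Fin m) ℝ | Φ X = 0} = (LinearMap.ker Φ : Set _) := by
        ext X; simp [LinearMap.mem_ker]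
      rw [hset]
      exact (LinearMap.ker Φ).convex
    obtain ⟨f, s, hf1, hf2⟩ := geometric_hahn_banach_open hUconv hUopen hBconv hdisj
    have hfB0 : ∀ X : Matrix (Fin m) (Fin m) ℝ, Φ X = 0 → f X = 0 := by
      intro X hX
      by_contra hne
      have hmem : ((s - 1) / f X) • X ∈ {X : Matrix (Fin m) (Fin m) ℝ | Φ X = 0} := by
        rw [Set.mem_setOf_eq, _root_.map_smul, hX, smul_zero]
      have h := hf2 _ hmem
      rw [_root_.map_smul] at h
      simp only [smul_eq_mul] at h
      rw [div_mul_cancel₀ _ hne] at h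
      linarith
    have hs0 : s ≤ 0 := by
      have h0 : (0 : Matrix (Fin m) (Fin m) ℝ) ∈ {X : Matrix (Fin m) (Fin m) ℝ | Φ X = 0} := by
        rw [Set.mem_setOf_eq, map_zero]
      have := hf2 0 h0
      simpa using this
    have hfU : ∀ X ∈ U, f X < 0 := fun X hX => lt_of_lt_of_le (hf1 X hX) hs0
    have hker : LinearMap.ker Φ ≤ LinearMap.ker (f.toLinearMap) := by
      intro X hX
      rw [LinearMap.mem_ker] at hX ⊢
      exact hfB0 X hX
    obtain ⟨K, hK⟩ := Submodule.exists_isCompl (LinearMap.range Φ)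
    set π := Submodule.linearProjOfIsCompl _ K hK with hπ
    set fq := Submodule.liftQ (LinearMap.ker Φ) f.toLinearMap hker with hfqdef
    set eΦ := LinearMap.quotKerEquivRange Φ with heΦ
    set ψ : Matrix (Fin N) (Fin N) ℝ →ₗ[ℝ] ℝ := fq ∘ₗ (eΦ.symm.toLinearMap ∘ₗ π) with hψdef
    have hψΦ : ∀ X, ψ (Φ X) = f X := by
      intro X
      have h1 : π (Φ X) = ⟨Φ X, LinearMap.mem_range_self Φ X⟩ :=
        Submodule.linearProjOfIsCompl_apply_left hK ⟨Φ X, LinearMap.mem_range_self Φ X⟩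
      have h2 : eΦ.symm ⟨Φ X, LinearMap.mem_range_self Φ X⟩ = Submodule.Quotient.mk X := by
        rw [LinearEquiv.symm_apply_eq]
        exact Subtype.ext (LinearMap.quotKerEquivRange_apply_mk Φ X).symm
      show fq (eΦ.symm.toLinearMap (π (Φ X))) = f X
      rw [h1]
      show fq (eΦ.symm _) = f X
      rw [h2]
      exact Submodule.liftQ_apply _ _ X
    set Dm : Fin N → Fin N → ℝ := fun i j => ψ (Matrix.single i j 1) with hDmdef
    have hψsum : ∀ Y : Matrix (Fin N) (Fin N) ℝ, ψ Y = ∑ i, ∑ j, Y i j * Dm i j := by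
      intro Y
      conv_lhs => rw [Matrix.matrix_eq_sum_single Y]
      rw [map_sum]
      apply Finset.sum_congr rfl
      intro i _
      rw [map_sum]
      apply Finset.sum_congr rfl
      intro j _
      have : Matrix.single i j (Y i j) = Y i j • Matrix.single i j 1 := by
        rw [Matrix.smul_single, smul_eq_mul, mul_one]
      rw [this, _root_.map_smul, smul_eq_mul]
    have hfform : ∀ X, f X = ∑ i, ∑ j,
        (if P i j then (W * (X + Xᴴ) * Wᵀ) i j else 0) * Dm i j := by
      intro X
      rw [← hψΦ X, hψsum]
      exact Finset.sum_congr rfl fun i _ => Finset.sum_congr rfl fun j _ => by rw [hΦapply]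
    have hMsym : ∀ X : Matrix (Fin m) (Fin m) ℝ, ∀ i j,
        (W * (X + Xᴴ) * Wᵀ) j i = (W * (X + Xᴴ) * Wᵀ) i j := by
      intro X i j
      have hXX : (X + Xᴴ)ᵀ = X + Xᴴ := by
        rw [Matrix.conjTranspose_eq_transpose_of_trivial, Matrix.transpose_add,
          Matrix.transpose_transpose]
        exact add_comm _ _
      have h1 : (W * (X + Xᴴ) * Wᵀ)ᵀ = W * (X + Xᴴ) * Wᵀ := by
        rw [Matrix.transpose_mul, Matrix.transpose_mul, Matrix.transpose_transpose, hXX,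
          Matrix.mul_assoc]
      exact congrFun (congrFun h1 i) j
    set C : Matrix (Fin N) (Fin N) ℝ :=
      Matrix.of fun i j => if P i j then -(Dm i j + Dm j i) else 0 with hCdef
    have hCapply : ∀ i j, C i j = if P i j then -(Dm i j + Dm j i) else 0 := fun i j => rfl
    have hgf : ∀ X, ∑ i, ∑ j, (W * (X + Xᴴ) * Wᵀ) i j * C i j = -2 * f X := by
      intro X
      have hterm : ∀ i j, (W * (X + Xᴴ) * Wᵀ) i j * C i j
          = (if P i j then -((W * (X + Xᴴ) * Wᵀ) i j * Dm i j) else 0)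
            + (if P i j then -((W * (X + Xᴴ) * Wᵀ) i j * Dm j i) else 0) := by
        intro i j
        rw [hCapply]
        by_cases h : P i j
        · rw [if_pos h, if_pos h, if_pos h]; ring
        · rw [if_neg h, if_neg h, if_neg h]; ring
      rw [Finset.sum_congr rfl fun i _ => Finset.sum_congr rfl fun j _ => hterm i j]
      rw [Finset.sum_congr rfl fun i _ => Finset.sum_add_distrib, Finset.sum_add_distrib]
      have hswap : (∑ i, ∑ j, (if P i j then -((W * (X + Xᴴ) * Wᵀ) i j * Dm j i) else 0))
          = ∑ i, ∑ j, (if P i j then -((W * (X + Xᴴ) * Wᵀ) i j * Dm i j) else 0) := by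
        rw [Finset.sum_comm]
        apply Finset.sum_congr rfl
        intro i _
        apply Finset.sum_congr rfl
        intro j _
        by_cases h : P i j
        · rw [if_pos (hPsymm i j h), if_pos h, hMsym X i j]
        · rw [if_neg (fun hh => h (hPsymm j i hh)), if_neg h]
      rw [hswap, hfform X]
      have hneg : ∀ i j, (if P i j then -((W * (X + Xᴴ) * Wᵀ) i j * Dm i j) else 0)
          = -((if P i j then (W * (X + Xᴴ) * Wᵀ) i j else 0) * Dm i j) := by
        intro i j
        by_cases h : P i j
        · rw [if_pos h, if_pos h]
        · rw [if_neg h, if_neg h, zero_mul, neg_zero]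
      rw [Finset.sum_congr rfl fun i _ => Finset.sum_congr rfl fun j _ => hneg i j]
      simp only [Finset.sum_neg_distrib]
      ring
    have hCsym : Cᵀ = C := by
      ext i j
      rw [Matrix.transpose_apply, hCapply, hCapply]
      by_cases h : P i j
      · rw [if_pos h, if_pos (hPsymm i j h)]; ring
      · rw [if_neg h, if_neg (fun hh => h (hPsymm j i hh))]
    have hCsupp : ∀ i j, C i j ≠ 0 → P i j := by
      intro i j h
      by_contra hne
      rw [hCapply, if_neg hne] at h
      exact h rfl
    have h1U : (1 : Matrix (Fin m) (Fin m) ℝ) ∈ U := by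
      rw [hUdef, Set.mem_setOf_eq, s12_posdef_iff]
      refine ⟨isHermitian_add_transpose_self _, ?_⟩
      intro y hy
      rw [Matrix.conjTranspose_one, Matrix.add_mulVec, Matrix.one_mulVec, dotProduct_add]
      have := s12_sq_pos y hy
      simp only [dotProduct] at this ⊢
      linarith
    have hCquad : ∀ x : Fin m → ℝ, 0 ≤ (W *ᵥ x) ⬝ᵥ (C *ᵥ (W *ᵥ x)) := by
      intro x
      set z := W *ᵥ x with hz
      set Px : Matrix (Fin m) (Fin m) ℝ := Matrix.of fun a b => x a * x b with hPxdef
      have hPxapply : ∀ a b, Px a b = x a * x b := fun a b => rfl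
      have hPxH : Pxᴴ = Px := by
        ext a b
        rw [Matrix.conjTranspose_apply, hPxapply, hPxapply, star_trivial, mul_comm]
      have hPxform : ∀ y : Fin m → ℝ, y ⬝ᵥ (Px *ᵥ y) = (x ⬝ᵥ y) * (x ⬝ᵥ y) := by
        intro y
        have hrow : ∀ a, (Px *ᵥ y) a = x a * (x ⬝ᵥ y) := by
          intro a
          show ∑ b, Px a b * y b = x a * (x ⬝ᵥ y)
          rw [dotProduct, Finset.mul_sum]
          apply Finset.sum_congr rfl
          intro b _
          rw [hPxapply]; ring
        show ∑ a, y a * (Px *ᵥ y) a = _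
        rw [Finset.sum_congr rfl fun a _ => by rw [hrow a]]
        rw [dotProduct, Finset.sum_mul]
        apply Finset.sum_congr rfl
        intro a _
        ring
      have hf1mem : ∀ ε : ℝ, 0 < ε → (Px + ε • 1) ∈ U := by
        intro ε hε
        rw [hUdef, Set.mem_setOf_eq, s12_posdef_iff]
        refine ⟨isHermitian_add_transpose_self _, ?_⟩
        intro y hy
        have hexp : (Px + ε • 1) + (Px + ε • 1)ᴴ = (Px + Px) + ((ε • 1 : Matrix (Fin m) (Fin m) ℝ) + ε • 1) := by
          rw [Matrix.conjTranspose_add, Matrix.conjTranspose_smul, Matrix.conjTranspose_one,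
            hPxH, star_trivial]
          abel
        rw [hexp, Matrix.add_mulVec, Matrix.add_mulVec, Matrix.add_mulVec,
          dotProduct_add, dotProduct_add, dotProduct_add,
          Matrix.smul_mulVec, Matrix.one_mulVec, dotProduct_smul, hPxform y]
        have h1 := s12_sq_pos y hy
        have h2 := mul_self_nonneg (x ⬝ᵥ y)
        have h3 : (0:ℝ) < ε * (y ⬝ᵥ y) := mul_pos hε h1
        simp only [smul_eq_mul]
        linarith
      have hfPx : f Px ≤ 0 := by
        by_contra hpos
        push_neg at hpos
        set ε := f Px / (2 * (|f 1| + 1)) with hεdef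
        have hd : (0:ℝ) < |f 1| + 1 := by positivity
        have hεpos : 0 < ε := by rw [hεdef]; positivity
        have hlt := hfU _ (hf1mem ε hεpos)
        have hflin : f (Px + ε • (1 : Matrix (Fin m) (Fin m) ℝ)) = f Px + ε * f 1 := by
          rw [f.map_add, f.map_smul, smul_eq_mul]
        rw [hflin] at hlt
        have hb1 : ε * f 1 ≥ -(ε * (|f 1| + 1)) := by
          have := neg_abs_le (f 1)
          nlinarith
        have hb2 : ε * (|f 1| + 1) = f Px / 2 := by
          rw [hεdef]
          field_simp
        linarith
      have hgP := hgf Px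
      have hWPx : ∀ i j, (W * (Px + Pxᴴ) * Wᵀ) i j = 2 * (z i * z j) := by
        intro i j
        rw [hPxH]
        have hsplit : W * (Px + Px) * Wᵀ = W * Px * Wᵀ + W * Px * Wᵀ := by
          rw [Matrix.mul_add, Matrix.add_mul]
        rw [hsplit, Matrix.add_apply]
        have hentry : (W * Px * Wᵀ) i j = z i * z j := by
          rw [Matrix.mul_apply]
          have hcol : ∀ b, (W * Px) i b = z i * x b := by
            intro b
            rw [Matrix.mul_apply]
            have : z i = ∑ a, W i a * x a := rfl
            rw [this, Finset.sum_mul]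
            apply Finset.sum_congr rfl
            intro a _
            rw [hPxapply]; ring
          rw [Finset.sum_congr rfl fun b _ => by rw [hcol b, Matrix.transpose_apply]]
          have : z j = ∑ b, W j b * x b := rfl
          rw [this, Finset.mul_sum]
          apply Finset.sum_congr rfl
          intro b _
          ring
        rw [hentry]
        ring
      have hqz : z ⬝ᵥ (C *ᵥ z) = ∑ i, ∑ j, (z i * z j) * C i j := by
        show ∑ i, z i * (C *ᵥ z) i = _
        apply Finset.sum_congr rfl
        intro i _
        show z i * ∑ j, C i j * z j = _
        rw [Finset.mul_sum]
        apply Finset.sum_congr rfl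
        intro j _
        ring
      have hsum2 : ∑ i, ∑ j, (W * (Px + Pxᴴ) * Wᵀ) i j * C i j
          = 2 * ∑ i, ∑ j, (z i * z j) * C i j := by
        rw [Finset.mul_sum]
        apply Finset.sum_congr rfl
        intro i _
        rw [Finset.mul_sum]
        apply Finset.sum_congr rfl
        intro j _
        rw [hWPx i j]
        ring
      rw [hqz]
      rw [hsum2] at hgP
      linarith
    have hC0 : C = 0 := hD C hCsym hCsupp hCquad
    have hf1U := hfU 1 h1U
    have hf10 : f 1 = 0 := by
      have hg1 := hgf 1
      rw [hC0] at hg1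
      simp only [Matrix.zero_apply, mul_zero, Finset.sum_const_zero] at hg1
      linarith
    linarith



end S12sepB

section S12main

theorem stmt_12 (d n : ℕ) (hn : d + 1 ≤ n) (G : SimpleGraph (Fin n)) [DecidableRel G.Adj]
    (hclique : ∀ i j : Fin n, i ≠ j → (i : ℕ) < d + 1 → (j : ℕ) < d + 1 → G.Adj i j)
    (hlat : ∀ j : Fin n, d + 1 ≤ (j : ℕ) →
      (Finset.univ.filter (fun i : Fin n => G.Adj i j ∧ i < j)).card = d + 1)
    (p : Fin n → (Fin d → ℝ))
    (hGP : ∀ s : Finset (Fin n), s.card = d + 1 →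
        AffineIndependent ℝ (fun i : s => p i)) :
    ∃ S : Matrix (Fin n) (Fin n) ℝ, S.PosSemidef ∧ S.rank = n - (d + 1) ∧
      (Matrix.of fun (i : Fin (d + 1)) (j : Fin n) =>
        if h : (i : ℕ) < d then p j ⟨i, h⟩ else (1 : ℝ)) * S = 0 ∧
      (∀ i j : Fin n, i ≠ j → ¬ G.Adj i j → S i j = 0) := by
  classical
  set m := n - (d + 1) with hm
  have hvlt : ∀ j : Fin m, d + 1 + (j:ℕ) < n := fun j => by
    have := j.isLt
    omega
  set vj : Fin m → Fin n := fun j => ⟨d + 1 + (j:ℕ), hvlt j⟩ with hvj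
  set Nv : Fin n → Finset (Fin n) :=
    fun v => Finset.univ.filter (fun i => G.Adj i v ∧ i < v) with hNv
  have hNvcard : ∀ j : Fin m, (Nv (vj j)).card = d + 1 := fun j =>
    hlat (vj j) (by simp [hvj])
  have hNvlt : ∀ v : Fin n, ∀ i ∈ Nv v, i < v := fun v i hi =>
    (Finset.mem_filter.mp hi).2.2
  have hvnotin : ∀ j, vj j ∉ Nv (vj j) := fun j h => absurd (hNvlt _ _ h) (lt_irrefl _)
  have hdep := fun j : Fin m => s12_dep p hGP (Nv (vj j)) (hNvcard j) (vj j) (hvnotin j)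
  choose ω hω1 hω2 hω3 using hdep
  set W : Matrix (Fin n) (Fin m) ℝ := Matrix.of fun i j => ω j i with hW
  have hωlt : ∀ j : Fin m, ∀ i : Fin n, (vj j : ℕ) < (i:ℕ) → ω j i = 0 := by
    intro j i hi
    apply hω3 j i
    · intro h
      rw [h] at hi
      omega
    · intro hN
      have h2 : (i:ℕ) < (vj j : ℕ) := hNvlt _ _ hN
      omega
  have hAW : s12A p * W = 0 := by
    ext r j
    have h := congrFun (hω1 j) r
    simp only [Matrix.mulVec, dotProduct, Pi.zero_apply] at h
    simp only [Matrix.mul_apply, Matrix.zero_apply, hW, Matrix.of_apply]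
    exact h
  -- rank W = m
  set T : Matrix (Fin m) (Fin m) ℝ := Matrix.of fun a b => W (vj a) b with hTdef
  have hTtri : T.BlockTriangular id := by
    intro a b hba
    show ω b (vj a) = 0
    apply hωlt
    show (vj b : ℕ) < (vj a : ℕ)
    simp only [hvj]
    have : (b:ℕ) < (a:ℕ) := hba
    omega
  have hTdet : T.det = 1 := by
    rw [Matrix.det_of_upperTriangular hTtri]
    have : ∀ a : Fin m, T a a = 1 := fun a => hω2 a
    simp [this]
  have hTunit : IsUnit T.det := by rw [hTdet]; exact isUnit_one
  have hrankW : W.rank = m := by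
    apply le_antisymm
    · have := Matrix.rank_le_card_width W
      simpa using this
    · set E : Matrix (Fin m) (Fin n) ℝ :=
        Matrix.of fun (a : Fin m) (i : Fin n) => if i = vj a then (1:ℝ) else 0 with hE
      have hEW : E * W = T := by
        ext a b
        rw [Matrix.mul_apply]
        have : ∀ i : Fin n, E a i * W i b = if i = vj a then W i b else 0 := by
          intro i
          by_cases h : i = vj a
          · simp [hE, h]
          · simp [hE, h]
        rw [Finset.sum_congr rfl fun i _ => this i]
        rw [Finset.sum_ite_eq' Finset.univ (vj a) (fun i => W i b)]
        simp [hTdef]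
      have h1 : (T⁻¹ * E) * W = 1 := by
        rw [Matrix.mul_assoc, hEW, Matrix.nonsing_inv_mul T hTunit]
      have h2 : m = ((T⁻¹ * E) * W).rank := by
        rw [h1, Matrix.rank_one]
        simp
      have h3 := Matrix.rank_mul_le_right (T⁻¹ * E) W
      omega
  -- rank A = d + 1
  have hrankA : (s12A p).rank = d + 1 := by
    apply le_antisymm
    · have := Matrix.rank_le_card_height (s12A p)
      simpa using this
    · have htop : LinearMap.range (s12A p).mulVecLin = ⊤ := by
        rw [Matrix.range_mulVecLin]
        rw [eq_top_iff]
        set N₀ : Finset (Fin n) := Finset.image (Fin.castLE hn) Finset.univ with hN₀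
        have hN₀card : N₀.card = d + 1 := by
          rw [hN₀, Finset.card_image_of_injective _ (Fin.castLE_injective hn)]
          simp
        have hspan := s12_span p hGP N₀ hN₀card
        rw [← hspan]
        apply Submodule.span_mono
        rintro x ⟨i, rfl⟩
        exact ⟨(i : Fin n), rfl⟩
      rw [Matrix.rank]
      rw [htop]
      simp
  -- kernel A = range W
  have hker : ∀ z : Fin n → ℝ, (s12A p) *ᵥ z = 0 → ∃ x : Fin m → ℝ, W *ᵥ x = z := by
    intro z hz
    have hle : LinearMap.range W.mulVecLin ≤ LinearMap.ker (s12A p).mulVecLin := by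
      rintro _ ⟨x, rfl⟩
      rw [LinearMap.mem_ker]
      show (s12A p) *ᵥ (W *ᵥ x) = 0
      rw [Matrix.mulVec_mulVec, hAW, Matrix.zero_mulVec]
    have heq : LinearMap.range W.mulVecLin = LinearMap.ker (s12A p).mulVecLin := by
      apply Submodule.eq_of_le_of_finrank_le hle
      have h1 := LinearMap.finrank_range_add_finrank_ker (s12A p).mulVecLin
      have h2 : Module.finrank ℝ (Fin n → ℝ) = n := by simp
      have h3 : Module.finrank ℝ (LinearMap.range (s12A p).mulVecLin) = d + 1 := hrankA
      have h4 : Module.finrank ℝ (LinearMap.range W.mulVecLin) = m := hrankW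
      rw [h2, h3] at h1
      omega
    have hzmem : z ∈ LinearMap.range W.mulVecLin := by
      rw [heq, LinearMap.mem_ker]
      exact hz
    exact hzmem
  -- D fact
  have hDfact : ∀ C : Matrix (Fin n) (Fin n) ℝ, Cᵀ = C →
      (∀ i j : Fin n, C i j ≠ 0 → i ≠ j ∧ ¬G.Adj i j) →
      (∀ x : Fin m → ℝ, 0 ≤ (W *ᵥ x) ⬝ᵥ (C *ᵥ (W *ᵥ x))) → C = 0 := by
    intro C hsym hsupp hquad
    apply s12_D G hclique hlat p hGP n (le_refl n) C hsym
    · intro i j hC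
      exact ⟨(hsupp i j hC).1, (hsupp i j hC).2, i.isLt, j.isLt⟩
    · intro z _ hAz
      obtain ⟨x, hx⟩ := hker z hAz
      rw [← hx]
      exact hquad x
  obtain ⟨Λ, hΛPD, hΛsupp⟩ := s12_sep W (fun i j => i ≠ j ∧ ¬G.Adj i j)
    (fun i j h => ⟨h.1.symm, fun ha => h.2 (G.adj_symm ha)⟩) hDfact
  refine ⟨W * Λ * Wᵀ, ?_, ?_, ?_, ?_⟩
  · have h := hΛPD.posSemidef.mul_mul_conjTranspose_same W
    rwa [Matrix.conjTranspose_eq_transpose_of_trivial] at h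
  · obtain ⟨R, hRR, hRH'⟩ : ∃ R : Matrix (Fin m) (Fin m) ℝ, R * R = Λ ∧ Rᴴ = R := by
      open scoped MatrixOrder Matrix.Norms.L2Operator in
      exact ⟨CFC.sqrt Λ, CFC.sqrt_mul_sqrt_self Λ hΛPD.posSemidef.nonneg,
        (Matrix.nonneg_iff_posSemidef.mp (CFC.sqrt_nonneg Λ)).1⟩
    have hRH : Rᵀ = R := by
      have h : Rᴴ = R := hRH'
      rwa [Matrix.conjTranspose_eq_transpose_of_trivial] at h
    have hfact : W * Λ * Wᵀ = (W * R) * (W * R)ᵀ := by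
      rw [Matrix.transpose_mul, hRH, ← hRR]
      simp only [Matrix.mul_assoc]
    rw [hfact, Matrix.rank_self_mul_transpose]
    have hRdet : IsUnit R.det := by
      have hdetΛ : 0 < Λ.det := hΛPD.det_pos
      have hh : R.det * R.det = Λ.det := by rw [← Matrix.det_mul, hRR]
      have hne : R.det ≠ 0 := by
        intro h0
        rw [h0, mul_zero] at hh
        rw [← hh] at hdetΛ
        exact lt_irrefl _ hdetΛ
      exact isUnit_iff_ne_zero.mpr hne
    rw [Matrix.rank_mul_eq_left_of_isUnit_det R W hRdet, hrankW]
  · show s12A p * (W * Λ * Wᵀ) = 0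
    rw [← Matrix.mul_assoc, ← Matrix.mul_assoc, hAW, Matrix.zero_mul, Matrix.zero_mul]
  · intro i j hij hnadj
    exact hΛsupp i j ⟨hij, hnadj⟩

end S12main
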